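/- arXiv:1410.5300 — 3 statements merged into one kernel-verified Lean document; each statement's English description precedes it below -/
import Mathlib

section
/- For all integers n ≥ 0 and k ≥ 1, every sequence of nonzero real numbers ᾱ = (α₀, α₁, …, α_{n−1}) and all nonzero real numbers ℓ₁, …, ℓ_k, the multiparameter poly-Cauchy numbers of the first kind satisfy C_{n,L}^{(k)}(ᾱ) = (−1)^n (∏_{i=0}^{n−1} α_i) Σ_{m=0}^{n} P_m(−H_{n,ᾱ}^{(1)}, −H_{n,ᾱ}^{(2)}, …, −H_{n,ᾱ}^{(m)}) (ℓ₁ℓ₂⋯ℓ_k)^{m+1} / (m+1)^k. -/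
open Finset

/-- Iterated integral ∫₀^{ℓ₁}⋯∫₀^{ℓ_k} f(x₁x₂⋯x_k) dx₁⋯dx_k over the list of bounds. -/
noncomputable def iterInt : List ℝ → (ℝ → ℝ) → ℝ
  | [], f => f 1
  | l :: ls, f => ∫ x in (0:ℝ)..l, iterInt ls (fun y => f (x * y))

/-- Modified Bell polynomial P_m(x₁,…,x_m) = Σ_{k₁+2k₂+⋯+mk_m=m} ∏ (1/kᵢ!) (xᵢ/i)^{kᵢ}. -/
noncomputable def modBell (m : ℕ) (x : ℕ → ℝ) : ℝ :=
  ∑ K ∈ (Fintype.piFinset fun _ : Fin m => Finset.range (m + 1)).filter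
      (fun K => ∑ i : Fin m, (i.1 + 1) * K i = m),
    ∏ i : Fin m, (1 / ((K i).factorial : ℝ)) * (x (i.1 + 1) / ((i.1 : ℝ) + 1)) ^ K i

lemma iterInt_poly (ls : List ℝ) (s : Finset ℕ) (a : ℕ → ℝ) :
    iterInt ls (fun t => ∑ m ∈ s, a m * t ^ m) =
      ∑ m ∈ s, a m * ls.prod ^ (m+1) / ((m:ℝ)+1) ^ ls.length := by
  induction ls generalizing a with
  | nil => simp [iterInt]
  | cons l ls ih =>
    show (∫ x in (0:ℝ)..l, iterInt ls fun y => ∑ m ∈ s, a m * (x*y)^m) = _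
    have h1 : ∀ x:ℝ, (iterInt ls fun y => ∑ m ∈ s, a m * (x*y)^m)
        = ∑ m ∈ s, (a m * x^m) * (ls.prod ^ (m+1) / ((m:ℝ)+1) ^ ls.length) := by
      intro x
      have : (fun y => ∑ m ∈ s, a m * (x*y)^m) = fun y => ∑ m ∈ s, (a m * x^m) * y^m := by
        funext y; refine Finset.sum_congr rfl fun m _ => by rw [mul_pow]; ring
      rw [this, ih]
      exact Finset.sum_congr rfl fun m _ => by rw [mul_div_assoc]
    simp only [h1]
    rw [intervalIntegral.integral_finset_sum]
    · refine Finset.sum_congr rfl fun m _ => ?_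
      have : (fun x : ℝ => a m * x ^ m * (List.prod ls ^ (m+1) / ((m:ℝ)+1) ^ ls.length))
          = fun x : ℝ => (a m * (List.prod ls ^ (m+1) / ((m:ℝ)+1) ^ ls.length)) * x ^ m := by
        funext x; ring
      rw [this, intervalIntegral.integral_const_mul, integral_pow]
      simp only [List.prod_cons, List.length_cons]
      rw [mul_pow, pow_succ]
      field_simp
      ring
    · intro m _
      exact ((continuous_const.mul (continuous_pow m)).mul continuous_const).intervalIntegrable _ _

noncomputable def fTerm (x : ℕ → ℝ) (i k : ℕ) : ℝ :=
  (1 / (k.factorial : ℝ)) * (x (i + 1) / ((i : ℝ) + 1)) ^ k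

@[simp] lemma fTerm_zero (x : ℕ → ℝ) (i : ℕ) : fTerm x i 0 = 1 := by simp [fTerm]

noncomputable def mB (x : ℕ → ℝ) (N b m : ℕ) : ℝ :=
  ∑ K ∈ (Fintype.piFinset fun _ : Fin N => Finset.range b).filter
      (fun K => ∑ i : Fin N, (i.1 + 1) * K i = m),
    ∏ i : Fin N, fTerm x i.1 (K i)

lemma modBell_eq_mB (m : ℕ) (x : ℕ → ℝ) : modBell m x = mB x m (m+1) m := rfl

def pad (N : ℕ) (K : Fin N → ℕ) : ℕ → ℕ := fun a => if h : a < N then K ⟨a, h⟩ else 0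

@[simp] lemma pad_apply (N : ℕ) (K : Fin N → ℕ) (i : Fin N) : pad N K i.1 = K i := by
  simp [pad, i.2]

lemma sum_pad (N : ℕ) (K : Fin N → ℕ) :
    ∑ i : Fin N, (i.1 + 1) * K i = ∑ a ∈ range N, (a + 1) * pad N K a := by
  rw [← Fin.sum_univ_eq_sum_range (fun a => (a+1) * pad N K a)]
  exact Finset.sum_congr rfl fun i _ => by rw [pad_apply]

lemma prod_pad (x : ℕ → ℝ) (N : ℕ) (K : Fin N → ℕ) :
    ∏ i : Fin N, fTerm x i.1 (K i) = ∏ a ∈ range N, fTerm x a (pad N K a) := by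
  rw [← Fin.prod_univ_eq_prod_range (fun a => fTerm x a (pad N K a))]
  exact Finset.prod_congr rfl fun i _ => by rw [pad_apply]

lemma mem_forces_le {N m : ℕ} {K : Fin N → ℕ}
    (h : ∑ i : Fin N, (i.1 + 1) * K i = m) (i : Fin N) : (i.1+1) * K i ≤ m := by
  rw [← h]
  exact Finset.single_le_sum (f := fun j : Fin N => (j.1+1) * K j)
    (fun j _ => Nat.zero_le _) (mem_univ i)

lemma mem_forces_le' {N m : ℕ} {K : Fin N → ℕ}
    (h : ∑ i : Fin N, (i.1 + 1) * K i = m) (i : Fin N) : K i ≤ m :=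
  le_trans (Nat.le_mul_of_pos_left _ (Nat.succ_pos _)) (mem_forces_le h i)

lemma mB_b_stab (x : ℕ → ℝ) (N m b b' : ℕ) (hb : m + 1 ≤ b) (hb' : m + 1 ≤ b') :
    mB x N b m = mB x N b' m := by
  unfold mB
  congr 1
  ext K
  simp only [mem_filter, Fintype.mem_piFinset, mem_range]
  constructor <;> rintro ⟨h1, h2⟩ <;> refine ⟨fun i => ?_, h2⟩
  · have := mem_forces_le' h2 i; omega
  · have := mem_forces_le' h2 i; omega

lemma mB_N_stab (x : ℕ → ℝ) (m N N' b : ℕ) (hm : m ≤ N) (hN : N ≤ N') (hb : 0 < b) :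
    mB x N b m = mB x N' b m := by
  unfold mB
  refine Finset.sum_nbij'
    (i := fun K => fun j : Fin N' => pad N K j.1)
    (j := fun K => fun j : Fin N => K ⟨j.1, lt_of_lt_of_le j.2 hN⟩) ?_ ?_ ?_ ?_ ?_
  · intro K hK
    simp only [mem_filter, Fintype.mem_piFinset, mem_range] at hK ⊢
    obtain ⟨h1, h2⟩ := hK
    refine ⟨fun j => ?_, ?_⟩
    · by_cases h : j.1 < N
      · simpa [pad, h] using h1 ⟨j.1, h⟩
      · simpa [pad, h] using hb
    · have e : ∑ i : Fin N', (i.1 + 1) * pad N K i.1 = ∑ a ∈ range N', (a+1) * pad N K a :=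
        Fin.sum_univ_eq_sum_range (fun a => (a+1) * pad N K a) N'
      rw [e, ← Finset.sum_subset (Finset.range_subset_range.2 hN)
        (fun a _ ha => by have h' : ¬ a < N := fun h => ha (mem_range.2 h); simp [pad, h']), ← sum_pad, h2]
  · intro K hK
    simp only [mem_filter, Fintype.mem_piFinset, mem_range] at hK ⊢
    obtain ⟨h1, h2⟩ := hK
    have hz : ∀ j : Fin N', N ≤ j.1 → K j = 0 := by
      intro j hj
      have := mem_forces_le h2 j
      by_contra hne
      have : N + 1 ≤ (j.1 + 1) * K j := by
        calc N + 1 ≤ j.1 + 1 := by omega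
        _ ≤ (j.1+1) * K j := Nat.le_mul_of_pos_right _ (Nat.pos_of_ne_zero hne)
      omega
    refine ⟨fun j => h1 _, ?_⟩
    rw [← h2]
    have e1 : ∑ i : Fin N', (i.1 + 1) * K i = ∑ a ∈ range N', (a+1) * pad N' K a := sum_pad N' K
    have e2 : ∑ i : Fin N, (i.1 + 1) * K ⟨i.1, lt_of_lt_of_le i.2 hN⟩
        = ∑ a ∈ range N, (a+1) * pad N' K a := by
      rw [← Fin.sum_univ_eq_sum_range (fun a => (a+1) * pad N' K a)]
      refine Finset.sum_congr rfl fun i _ => ?_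
      have : pad N' K i.1 = K ⟨i.1, lt_of_lt_of_le i.2 hN⟩ := by
        simp [pad, lt_of_lt_of_le i.2 hN]
      rw [this]
    rw [e1, e2]
    refine Finset.sum_subset (Finset.range_subset_range.2 hN) fun a ha hna => ?_
    have haN : N ≤ a := by simpa using hna
    have haN' : a < N' := by simpa using ha
    simp [pad, haN', hz ⟨a, haN'⟩ haN]
  · intro K hK
    funext j
    simp [pad, j.2]
  · intro K hK
    simp only [mem_filter, Fintype.mem_piFinset, mem_range] at hK
    obtain ⟨h1, h2⟩ := hK
    have hz : ∀ j : Fin N', N ≤ j.1 → K j = 0 := by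
      intro j hj
      have := mem_forces_le h2 j
      by_contra hne
      have : N + 1 ≤ (j.1 + 1) * K j := by
        calc N + 1 ≤ j.1 + 1 := by omega
        _ ≤ (j.1+1) * K j := Nat.le_mul_of_pos_right _ (Nat.pos_of_ne_zero hne)
      omega
    funext j
    by_cases h : j.1 < N
    · simp [pad, h]
    · simp only [pad, h, dif_neg, not_false_iff]
      exact (hz j (le_of_not_gt h)).symm
  · intro K hK
    rw [prod_pad x N K]
    have : ∏ i : Fin N', fTerm x i.1 (pad N K i.1) = ∏ a ∈ range N', fTerm x a (pad N K a) :=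
      Fin.prod_univ_eq_prod_range (fun a => fTerm x a (pad N K a)) N'
    rw [this]
    refine Finset.prod_subset (Finset.range_subset_range.2 hN) fun a _ ha => ?_
    have h' : ¬ a < N := fun h => ha (mem_range.2 h)
    simp [pad, h']

lemma fTerm_succ (x : ℕ → ℝ) (i c : ℕ) :
    (((i+1) * (c+1) : ℕ) : ℝ) * fTerm x i (c+1) = x (i+1) * fTerm x i c := by
  have h1 : ((i:ℝ)+1) ≠ 0 := by positivity
  have h3 : ((c:ℝ)+1) ≠ 0 := by positivity
  have h4 : (c.factorial : ℝ) ≠ 0 := Nat.cast_ne_zero.2 c.factorial_ne_zero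
  simp only [fTerm, Nat.factorial_succ, pow_succ]
  push_cast
  field_simp


lemma update_sum_split (m : ℕ) (i : Fin m) (K : Fin m → ℕ) (c : ℕ) :
    ∑ j : Fin m, (j.1 + 1) * (Function.update K i c) j
      = (i.1 + 1) * c + ∑ j ∈ univ.erase i, (j.1 + 1) * K j := by
  rw [← Finset.add_sum_erase univ _ (mem_univ i), Function.update_self]
  congr 1
  exact Finset.sum_congr rfl fun j hj => by
    rw [Function.update_of_ne (Finset.ne_of_mem_erase hj)]

lemma sum_split (m : ℕ) (i : Fin m) (K : Fin m → ℕ) :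
    ∑ j : Fin m, (j.1 + 1) * K j = (i.1 + 1) * K i + ∑ j ∈ univ.erase i, (j.1 + 1) * K j :=
  (Finset.add_sum_erase univ _ (mem_univ i)).symm

lemma claim1 (x : ℕ → ℝ) (m : ℕ) (i : Fin m) :
    ∑ K ∈ (Fintype.piFinset fun _ : Fin m => Finset.range (m + 1)).filter
        (fun K => ∑ j : Fin m, (j.1 + 1) * K j = m),
      (((i.1 + 1) * K i : ℕ) : ℝ) * ∏ j : Fin m, fTerm x j.1 (K j)
      = x (i.1 + 1) * mB x m (m+1) (m - (i.1 + 1)) := by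
  rw [← Finset.sum_filter_add_sum_filter_not _ (fun K => K i = 0)]
  rw [Finset.sum_eq_zero (fun K hK => by
    simp only [mem_filter] at hK
    rw [hK.2]; simp)]
  rw [zero_add, mB, Finset.mul_sum]
  refine Finset.sum_nbij'
    (i := fun K => Function.update K i (K i - 1))
    (j := fun K => Function.update K i (K i + 1)) ?_ ?_ ?_ ?_ ?_
  · intro K hK
    simp only [mem_filter, Fintype.mem_piFinset, mem_range] at hK ⊢
    obtain ⟨⟨h1, h2⟩, h3⟩ := hK
    refine ⟨fun j => ?_, ?_⟩
    · rcases eq_or_ne j i with rfl | hne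
      · rw [Function.update_self]; have := h1 j; omega
      · rw [Function.update_of_ne hne]; exact h1 j
    · rw [update_sum_split]
      obtain ⟨c, hc⟩ : ∃ c, K i = c + 1 := ⟨K i - 1, by omega⟩
      rw [sum_split m i K, hc, Nat.mul_succ] at h2
      rw [hc]
      simp only [Nat.add_sub_cancel]
      set B := (i.1 + 1) * c with hB
      omega
  · intro K hK
    simp only [mem_filter, Fintype.mem_piFinset, mem_range] at hK ⊢
    obtain ⟨h1, h2⟩ := hK
    have hle : (i.1 + 1) * K i ≤ m - (i.1 + 1) := by
      rw [← h2]
      exact Finset.single_le_sum (f := fun j : Fin m => (j.1+1) * K j)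
        (fun j _ => Nat.zero_le _) (mem_univ i)
    have hKi : K i ≤ m - (i.1+1) := le_trans (Nat.le_mul_of_pos_left _ (Nat.succ_pos _)) hle
    refine ⟨⟨fun j => ?_, ?_⟩, ?_⟩
    · rcases eq_or_ne j i with rfl | hne
      · rw [Function.update_self]; have := j.2; omega
      · rw [Function.update_of_ne hne]; exact h1 j
    · rw [update_sum_split]
      rw [sum_split m i K] at h2
      rw [Nat.mul_succ]
      have : i.1 + 1 ≤ m := i.2
      set B := (i.1 + 1) * K i with hB
      omega
    · rw [Function.update_self]; omega
  · intro K hK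
    simp only [mem_filter] at hK
    funext j
    simp only [Function.update_apply]
    rcases eq_or_ne j i with rfl | hne
    · simp only [if_pos rfl, if_true]
      have := hK.2
      omega
    · simp [hne]
  · intro K hK
    funext j
    simp only [Function.update_apply]
    rcases eq_or_ne j i with rfl | hne
    · simp only [if_pos rfl, if_true]
      omega
    · simp [hne]
  · intro K hK
    simp only [mem_filter] at hK
    obtain ⟨c, hc⟩ : ∃ c, K i = c + 1 := ⟨K i - 1, by omega⟩
    rw [← Finset.mul_prod_erase univ _ (mem_univ i),
        ← Finset.mul_prod_erase univ (fun j => fTerm x j.1 ((Function.update K i (K i - 1)) j))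
          (mem_univ i)]
    have hP : ∏ j ∈ univ.erase i, fTerm x j.1 ((Function.update K i (K i - 1)) j)
        = ∏ j ∈ univ.erase i, fTerm x j.1 (K j) :=
      Finset.prod_congr rfl fun j hj => by
        rw [Function.update_of_ne (Finset.ne_of_mem_erase hj)]
    rw [hP, Function.update_self, hc]
    simp only [Nat.add_sub_cancel]
    rw [← mul_assoc, ← mul_assoc, fTerm_succ]

lemma modBell_rec (m : ℕ) (x : ℕ → ℝ) :
    (m : ℝ) * modBell m x = ∑ i ∈ Icc 1 m, x i * modBell (m - i) x := by
  rw [modBell_eq_mB, mB, Finset.mul_sum]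
  have step1 : ∀ K ∈ (Fintype.piFinset fun _ : Fin m => Finset.range (m + 1)).filter
      (fun K => ∑ i : Fin m, (i.1 + 1) * K i = m),
      (m : ℝ) * ∏ i : Fin m, fTerm x i.1 (K i)
        = ∑ i : Fin m, (((i.1 + 1) * K i : ℕ) : ℝ) * ∏ j : Fin m, fTerm x j.1 (K j) := by
    intro K hK
    simp only [mem_filter] at hK
    rw [← Finset.sum_mul]
    congr 1
    rw [← Nat.cast_sum, hK.2]
  rw [Finset.sum_congr rfl step1, Finset.sum_comm]
  have step2 : ∀ i : Fin m,
      ∑ K ∈ (Fintype.piFinset fun _ : Fin m => Finset.range (m + 1)).filter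
        (fun K => ∑ j : Fin m, (j.1 + 1) * K j = m),
        (((i.1 + 1) * K i : ℕ) : ℝ) * ∏ j : Fin m, fTerm x j.1 (K j)
      = x (i.1 + 1) * modBell (m - (i.1 + 1)) x := by
    intro i
    rw [claim1 x m i]
    congr 1
    rw [modBell_eq_mB]
    rw [mB_b_stab x m (m - (i.1+1)) (m+1) (m - (i.1+1) + 1) (by omega) (by omega)]
    rw [← mB_N_stab x (m - (i.1+1)) (m - (i.1+1)) m (m - (i.1+1) + 1) (le_refl _) (by omega)
      (by omega)]
  rw [Finset.sum_congr rfl (fun i _ => step2 i)]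
  rw [Fin.sum_univ_eq_sum_range (fun a => x (a + 1) * modBell (m - (a + 1)) x) m]
  rw [show Icc 1 m = Ico 1 (m+1) from by rw [Finset.Ico_add_one_right_eq_Icc], Finset.sum_Ico_eq_sum_range]
  simp only [Nat.add_sub_cancel]
  exact Finset.sum_congr rfl fun a _ => by rw [add_comm 1 a]

variable {n : ℕ}

noncomputable def Esym (n : ℕ) (y : Fin n → ℝ) (m : ℕ) : ℝ :=
  ∑ s ∈ powersetCard m (univ : Finset (Fin n)), ∏ j ∈ s, y j

lemma Esym_zero (y : Fin n → ℝ) : Esym n y 0 = 1 := by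
  simp [Esym]

lemma aeval_esymm (y : Fin n → ℝ) (m : ℕ) :
    (MvPolynomial.aeval y) (MvPolynomial.esymm (Fin n) ℝ m) = Esym n y m := by
  simp [MvPolynomial.esymm, Esym, map_sum]

lemma aeval_psum (y : Fin n → ℝ) (r : ℕ) :
    (MvPolynomial.aeval y) (MvPolynomial.psum (Fin n) ℝ r) = ∑ j, y j ^ r := by
  simp [MvPolynomial.psum]

lemma newton_real (y : Fin n → ℝ) (m : ℕ) :
    (m : ℝ) * Esym n y m = (-1) ^ (m + 1) *
      ∑ a ∈ antidiagonal m with a.1 < m, (-1) ^ a.1 * Esym n y a.1 * ∑ j, y j ^ a.2 := by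
  have h := congrArg (MvPolynomial.aeval y) (MvPolynomial.mul_esymm_eq_sum (Fin n) ℝ m)
  simp only [map_mul, map_sum, map_pow, map_neg, map_one, map_natCast, aeval_esymm,
    aeval_psum] at h
  exact h

lemma modBell_zero (x : ℕ → ℝ) : modBell 0 x = 1 := by
  simp [modBell]

lemma filter_antidiag_sum (g : ℕ → ℕ → ℝ) (m : ℕ) :
    ∑ a ∈ antidiagonal m with a.1 < m, g a.1 a.2 = ∑ i ∈ range m, g i (m - i) := by
  rw [Finset.sum_filter, Finset.Nat.sum_antidiagonal_eq_sum_range_succ_mk, Finset.sum_range_succ]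
  simp only [lt_irrefl, if_false, add_zero]
  exact Finset.sum_congr rfl fun i hi => by rw [if_pos (mem_range.1 hi)]

lemma key (n : ℕ) (y : Fin n → ℝ) (m : ℕ) :
    modBell m (fun r => -∑ j, y j ^ r) = (-1) ^ m * Esym n y m := by
  induction m using Nat.strong_induction_on with
  | _ m ih =>
    rcases Nat.eq_zero_or_pos m with rfl | hm
    · simp [modBell_zero, Esym_zero]
    · have hmne : (m : ℝ) ≠ 0 := Nat.cast_ne_zero.2 (by omega)
      refine mul_left_cancel₀ hmne ?_
      rw [modBell_rec]
      have hih : ∀ i ∈ Icc 1 m, (fun r => -∑ j, y j ^ r) i * modBell (m - i) (fun r => -∑ j, y j ^ r)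
          = (-(∑ j, y j ^ i)) * ((-1:ℝ) ^ (m - i) * Esym n y (m - i)) := by
        intro i hi
        simp only [mem_Icc] at hi
        rw [ih (m - i) (by omega)]
      rw [Finset.sum_congr rfl hih]
      have hmain : ∑ i ∈ Icc 1 m, (-(∑ j, y j ^ i)) * ((-1:ℝ) ^ (m - i) * Esym n y (m - i))
          = ∑ i ∈ range m, -((-1:ℝ) ^ i * Esym n y i * ∑ j, y j ^ (m - i)) := by
        refine Finset.sum_nbij' (i := fun i => m - i) (j := fun i => m - i) ?_ ?_ ?_ ?_ ?_
        · intro a ha; simp only [mem_Icc] at ha; simp only [mem_range]; omega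
        · intro a ha; simp only [mem_range] at ha; simp only [mem_Icc]; omega
        · intro a ha; simp only [mem_Icc] at ha; show m - (m - a) = a; omega
        · intro a ha; simp only [mem_range] at ha; show m - (m - a) = a; omega
        · intro a ha
          simp only [mem_Icc] at ha
          have h1 : m - (m - a) = a := by omega
          rw [h1]
          ring
      rw [hmain]
      have hnewton := newton_real y m
      rw [filter_antidiag_sum (fun i j => (-1:ℝ)^i * Esym n y i * ∑ l, y l ^ j) m] at hnewton
      calc ∑ i ∈ range m, -((-1:ℝ) ^ i * Esym n y i * ∑ j, y j ^ (m - i))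
          = -(∑ i ∈ range m, ((-1:ℝ) ^ i * Esym n y i * ∑ j, y j ^ (m - i))) := by
            rw [Finset.sum_neg_distrib]
        _ = ((-1:ℝ)^m * (-1)^(m+1)) * ∑ i ∈ range m, ((-1:ℝ) ^ i * Esym n y i * ∑ j, y j ^ (m - i)) := by
            have : ((-1:ℝ)^m * (-1)^(m+1)) = -1 := by
              rw [← pow_add]
              exact Odd.neg_one_pow ⟨m, by ring⟩
            rw [this]; ring
        _ = (-1:ℝ)^m * ((m:ℝ) * Esym n y m) := by rw [hnewton]; ring
        _ = (m:ℝ) * ((-1:ℝ)^m * Esym n y m) := by ring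

lemma prodExpand (n : ℕ) (y : Fin n → ℝ) (t : ℝ) :
    ∏ j, (1 - y j * t) = ∑ m ∈ range (n+1), (-1:ℝ)^m * Esym n y m * t^m := by
  have h1 : (∏ j, ((1:ℝ) - y j * t)) = ∏ j, ((-(y j * t)) + 1) :=
    Finset.prod_congr rfl fun j _ => by ring
  rw [h1, Finset.prod_add]
  simp only [Finset.prod_const_one, mul_one]
  rw [Finset.sum_powerset]
  have hcard : (univ : Finset (Fin n)).card = n := by simp
  rw [hcard]
  refine Finset.sum_congr rfl fun m _ => ?_
  rw [Esym, Finset.mul_sum, Finset.sum_mul]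
  refine Finset.sum_congr rfl fun s hs => ?_
  have hcs : s.card = m := (Finset.mem_powersetCard.1 hs).2
  calc ∏ j ∈ s, (-(y j * t)) = ∏ j ∈ s, ((-1) * y j * t) :=
        Finset.prod_congr rfl fun j _ => by ring
    _ = (∏ _j ∈ s, (-1:ℝ)) * (∏ j ∈ s, y j) * ∏ _j ∈ s, t := by
        rw [Finset.prod_mul_distrib, Finset.prod_mul_distrib]
    _ = (-1:ℝ)^m * (∏ j ∈ s, y j) * t^m := by
        rw [Finset.prod_const, Finset.prod_const, hcs]
    _ = (-1:ℝ) ^ m * (∏ j ∈ s, y j) * t ^ m := by ring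

theorem stmt5 (n k : ℕ) (hk : 1 ≤ k) (α : ℕ → ℝ) (hα : ∀ i < n, α i ≠ 0)
    (L : Fin k → ℝ) (hL : ∀ i, L i ≠ 0) :
    iterInt (List.ofFn L) (fun t => ∏ i ∈ range n, (t - α i)) =
      (-1 : ℝ) ^ n * (∏ i ∈ range n, α i) *
        ∑ m ∈ range (n + 1),
          modBell m (fun r => -∑ j ∈ range n, 1 / α j ^ r) *
            (∏ i, L i) ^ (m + 1) / ((m : ℝ) + 1) ^ k := by
  have hfun : (fun t => ∏ i ∈ range n, (t - α i))
      = fun t => ∑ m ∈ range (n+1),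
          ((-1:ℝ)^n * (∏ i ∈ range n, α i) *
            modBell m (fun r => -∑ j ∈ range n, 1 / α j ^ r)) * t^m := by
    funext t
    have h1 : ∏ i ∈ range n, (t - α i)
        = ∏ i ∈ range n, ((-α i) * (1 - (α i)⁻¹ * t)) := by
      refine Finset.prod_congr rfl fun i hi => ?_
      have h := hα i (mem_range.1 hi)
      have e : (-α i) * (1 - (α i)⁻¹ * t) = -α i + (α i * (α i)⁻¹) * t := by ring
      rw [e, mul_inv_cancel₀ h]
      ring
    rw [h1, Finset.prod_mul_distrib]
    have h2 : ∏ i ∈ range n, (-α i) = (-1:ℝ)^n * ∏ i ∈ range n, α i := by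
      calc ∏ i ∈ range n, (-α i) = ∏ i ∈ range n, ((-1) * α i) :=
            Finset.prod_congr rfl fun i _ => by ring
        _ = (∏ _i ∈ range n, (-1:ℝ)) * ∏ i ∈ range n, α i := Finset.prod_mul_distrib
        _ = (-1:ℝ)^n * ∏ i ∈ range n, α i := by rw [Finset.prod_const, Finset.card_range]
    rw [h2, ← Fin.prod_univ_eq_prod_range (fun i => 1 - (α i)⁻¹ * t) n,
        prodExpand n (fun j => (α j.1)⁻¹) t, Finset.mul_sum]
    refine Finset.sum_congr rfl fun m _ => ?_
    have hx : (fun r => -∑ j ∈ range n, 1 / α j ^ r)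
        = fun r => -∑ j : Fin n, ((α j.1)⁻¹) ^ r := by
      funext r
      congr 1
      rw [← Fin.sum_univ_eq_sum_range (fun j => 1 / α j ^ r) n]
      exact Finset.sum_congr rfl fun j _ => by rw [one_div, inv_pow]
    rw [hx, key n (fun j => (α j.1)⁻¹) m]
    ring
  rw [hfun, iterInt_poly (List.ofFn L) (range (n+1))
    (fun m => (-1:ℝ)^n * (∏ i ∈ range n, α i) *
      modBell m (fun r => -∑ j ∈ range n, 1 / α j ^ r))]
  rw [List.prod_ofFn, List.length_ofFn, Finset.mul_sum]
  exact Finset.sum_congr rfl fun m _ => by ring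
end

section
/- For all integers n ≥ 0 and k ≥ 1, every sequence of real numbers ᾱ = (α₀, α₁, …, α_{n−1}), all nonzero real numbers ℓ₁, …, ℓ_k, and every real number z, the multiparameter poly-Cauchy polynomials of the second kind satisfy Ĉ_{n,L}^{(k)}(z;ᾱ) = Σ_{i=0}^{n} Σ_{m=i}^{n} (−1)^{i+n} binom(m,i) |s_ᾱ(n,m)| (ℓ₁ℓ₂⋯ℓ_k)^{m−i+1} / (m−i+1)^k · z^i. -/
open Finset

lemma iterInt_sum {ι : Type*} (s : Finset ι) (e : ι → ℕ) :
    ∀ (ls : List ℝ) (c : ι → ℝ), iterInt ls (fun t => ∑ a ∈ s, c a * t ^ e a) =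
      ∑ a ∈ s, c a * ls.prod ^ (e a + 1) / ((e a : ℝ) + 1) ^ ls.length
  | [], c => by simp [iterInt]
  | l :: ls, c => by
    show (∫ x in (0:ℝ)..l, iterInt ls (fun y => ∑ a ∈ s, c a * (x * y) ^ e a)) = _
    have h1 : ∀ x : ℝ, iterInt ls (fun y => ∑ a ∈ s, c a * (x * y) ^ e a)
        = ∑ a ∈ s, (c a * ls.prod ^ (e a + 1) / ((e a : ℝ) + 1) ^ ls.length) * x ^ e a := by
      intro x
      have h2 : (fun y : ℝ => ∑ a ∈ s, c a * (x * y) ^ e a)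
          = (fun y : ℝ => ∑ a ∈ s, (c a * x ^ e a) * y ^ e a) := by
        funext y
        refine Finset.sum_congr rfl fun a _ => ?_
        rw [mul_pow]; ring
      rw [h2, iterInt_sum s e ls (fun a => c a * x ^ e a)]
      refine Finset.sum_congr rfl fun a _ => by ring
    simp only [h1]
    rw [intervalIntegral.integral_finset_sum]
    · refine Finset.sum_congr rfl fun a _ => ?_
      rw [intervalIntegral.integral_const_mul, integral_pow]
      simp only [List.prod_cons, List.length_cons]
      rw [zero_pow (by omega), mul_pow, pow_succ ((e a : ℝ) + 1)]
      field_simp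
      ring
    · intro a _
      exact (Continuous.intervalIntegrable (by continuity) _ _)

lemma triangle (n : ℕ) (f : ℕ → ℕ → ℝ) :
    ∑ m ∈ range (n + 1), ∑ i ∈ range (m + 1), f m i
      = ∑ i ∈ range (n + 1), ∑ m ∈ Icc i n, f m i := by
  rw [Finset.sum_sigma', Finset.sum_sigma']
  refine Finset.sum_nbij' (fun p => ⟨p.2, p.1⟩) (fun p => ⟨p.2, p.1⟩) ?_ ?_ ?_ ?_ ?_ <;>
    simp only [Finset.mem_sigma, Finset.mem_range, Finset.mem_Icc] <;>
    first
      | (rintro ⟨a, b⟩ h; simp at h ⊢; omega)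
      | (rintro ⟨a, b⟩ h; rfl)
      | (rintro ⟨a, b⟩ h; simp)

theorem stmt15 (n k : ℕ) (hk : 1 ≤ k) (α : ℕ → ℝ) (L : Fin k → ℝ)
    (hL : ∀ i, L i ≠ 0) (z : ℝ) (sabs : ℕ → ℝ)
    (hsabs : ∀ x : ℝ, ∏ i ∈ range n, (x + α i) = ∑ m ∈ range (n + 1), sabs m * x ^ m) :
    iterInt (List.ofFn L) (fun t => ∏ i ∈ range n, (-t - α i + z)) =
      ∑ i ∈ range (n + 1), ∑ m ∈ Icc i n,
        (-1 : ℝ) ^ (i + n) * (m.choose i : ℝ) * sabs m *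
          (∏ j, L j) ^ (m - i + 1) / (((m - i : ℕ) : ℝ) + 1) ^ k * z ^ i := by
  classical
  set S : Finset ((_ : ℕ) × ℕ) := (range (n + 1)).sigma (fun m => range (m + 1)) with hS
  have key : (fun t : ℝ => ∏ i ∈ range n, (-t - α i + z))
      = (fun t : ℝ => ∑ p ∈ S, ((-1 : ℝ) ^ n * sabs p.1 * (-z) ^ p.2 * (p.1.choose p.2 : ℝ))
          * t ^ (p.1 - p.2)) := by
    funext t
    have h1 : ∏ i ∈ range n, (-t - α i + z) = (-1 : ℝ) ^ n * ∏ i ∈ range n, ((t - z) + α i) := by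
      calc ∏ i ∈ range n, (-t - α i + z)
          = ∏ i ∈ range n, (-1 : ℝ) * ((t - z) + α i) :=
            Finset.prod_congr rfl fun i _ => by ring
        _ = _ := by rw [Finset.prod_mul_distrib, Finset.prod_const, Finset.card_range]
    rw [h1, hsabs (t - z)]
    have h2 : ∀ m : ℕ, (t - z) ^ m
        = ∑ i ∈ range (m + 1), (-z) ^ i * t ^ (m - i) * (m.choose i : ℝ) := by
      intro m
      rw [show t - z = -z + t by ring, add_pow]
    rw [Finset.mul_sum, hS, Finset.sum_sigma]
    refine Finset.sum_congr rfl fun m _ => ?_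
    rw [h2 m, Finset.mul_sum, Finset.mul_sum]
    refine Finset.sum_congr rfl fun i _ => by ring
  rw [key, iterInt_sum S (fun p => p.1 - p.2) (List.ofFn L)]
  have hlen : (List.ofFn L).length = k := List.length_ofFn
  have hprod : (List.ofFn L).prod = ∏ j, L j := List.prod_ofFn
  rw [hS, Finset.sum_sigma]
  simp only [hlen, hprod]
  rw [triangle n (fun m i => (-1 : ℝ) ^ n * sabs m * (-z) ^ i * (m.choose i : ℝ)
      * (∏ j, L j) ^ (m - i + 1) / (((m - i : ℕ) : ℝ) + 1) ^ k)]
  refine Finset.sum_congr rfl fun i hi => Finset.sum_congr rfl fun m hm => ?_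
  rw [neg_pow z i, pow_add]
  ring
end

section
/- For all integers n ≥ 0 and k ≥ 1, every sequence of real numbers ᾱ = (α₀, α₁, …, α_{n−1}), all nonzero real numbers ℓ₁, …, ℓ_k, and every real number z, the multiparameter poly-Cauchy polynomials of the second kind are expressed through the multiparameter poly-Bernoulli polynomials by Ĉ_{n,L}^{(k)}(z;ᾱ) = Σ_{j=0}^{n} Σ_{m=j}^{n} (−1)^j (s_ᾱ(n,m) s_ᾱ(m,j) / m!) B_{j,ᾱ,L}^{(k)}(z). -/
open Finset

lemma iterInt_sum_pow (N : ℕ) (l : List ℝ) : ∀ (c : ℕ → ℝ),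
    iterInt l (fun t => ∑ m ∈ range N, c m * t ^ m)
      = ∑ m ∈ range N, c m * l.prod ^ (m + 1) / ((m : ℝ) + 1) ^ l.length := by
  induction l with
  | nil => intro c; simp [iterInt]
  | cons a ls ih =>
    intro c
    show (∫ x in (0:ℝ)..a, iterInt ls (fun y => ∑ m ∈ range N, c m * (x * y) ^ m)) = _
    have key : ∀ x : ℝ, iterInt ls (fun y => ∑ m ∈ range N, c m * (x * y) ^ m)
        = ∑ m ∈ range N, (c m * ls.prod ^ (m + 1) / ((m : ℝ) + 1) ^ ls.length) * x ^ m := by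
      intro x
      have h1 : (fun y => ∑ m ∈ range N, c m * (x * y) ^ m)
          = fun y => ∑ m ∈ range N, (c m * x ^ m) * y ^ m := by
        funext y; apply Finset.sum_congr rfl; intro m _; ring
      rw [h1, ih (fun m => c m * x ^ m)]
      apply Finset.sum_congr rfl; intro m _; ring
    simp_rw [key]
    rw [intervalIntegral.integral_finset_sum]
    · apply Finset.sum_congr rfl
      intro m hm
      rw [intervalIntegral.integral_const_mul, integral_pow]
      have h0 : (0:ℝ) ^ (m+1) = 0 := by simp
      simp only [List.prod_cons, List.length_cons, h0, sub_zero]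
      rw [mul_pow, pow_succ ((m:ℝ)+1)]
      field_simp
    · intro m _
      exact (continuous_const.mul (continuous_pow m)).intervalIntegrable 0 a

lemma sum_if_le {M : Type*} [AddCommMonoid M] {m n : ℕ} (h : m ≤ n) (f : ℕ → M) :
    ∑ j ∈ range (n + 1), (if j ≤ m then f j else 0) = ∑ j ∈ range (m + 1), f j := by
  rw [← Finset.sum_filter]
  apply Finset.sum_congr _ (fun _ _ => rfl)
  ext j
  simp only [mem_filter, mem_range]
  omega

lemma swap_sum {M : Type*} [AddCommMonoid M] (N : ℕ) (f : ℕ → ℕ → M) :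
    ∑ m ∈ range (N + 1), ∑ p ∈ range (m + 1), f m p
      = ∑ p ∈ range (N + 1), ∑ m ∈ Icc p N, f m p := by
  apply Finset.sum_comm'
  intro m p
  simp only [mem_range, mem_Icc]
  omega

lemma coeff_ext (N : ℕ) (a b : ℕ → ℝ)
    (h : ∀ x : ℝ, ∑ j ∈ range N, a j * x ^ j = ∑ j ∈ range N, b j * x ^ j) :
    ∀ j < N, a j = b j := by
  intro j hj
  have hp : (∑ j ∈ range N, Polynomial.C (a j) * Polynomial.X ^ j)
      = ∑ j ∈ range N, Polynomial.C (b j) * Polynomial.X ^ j := by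
    apply Polynomial.funext
    intro r
    simpa [Polynomial.eval_finset_sum] using h r
  have := congrArg (fun p => Polynomial.coeff p j) hp
  simpa [Polynomial.finset_sum_coeff, Polynomial.coeff_C_mul, Polynomial.coeff_X_pow,
    Finset.sum_ite_eq, hj] using this

lemma stirling_inv (n : ℕ) (α : ℕ → ℝ) (s S : ℕ → ℕ → ℝ)
    (hs : ∀ m ≤ n, ∀ x : ℝ,
      ∏ i ∈ range m, (x - α i) = ∑ j ∈ range (m + 1), s m j * x ^ j)
    (hS : ∀ p ≤ n, ∀ x : ℝ,
      x ^ p = ∑ m ∈ range (p + 1), S p m * ∏ i ∈ range m, (x - α i)) :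
    ∀ m ≤ n, ∀ p ≤ n,
      ∑ j ∈ Icc p m, s m j * S j p = if m = p then 1 else 0 := by
  set D : ℕ → ℕ → ℝ := fun q j =>
    ∑ m ∈ range (n + 1), (if m ≤ q then S q m else 0) * (if j ≤ m then s m j else 0) with hD
  have stepA : ∀ q ≤ n, ∀ x : ℝ,
      ∑ j ∈ range (n + 1), D q j * x ^ j = ∑ j ∈ range (n + 1), (if j = q then 1 else 0) * x ^ j := by
    intro q hq x
    have h1 : ∑ j ∈ range (n + 1), D q j * x ^ j
        = ∑ m ∈ range (n + 1), (if m ≤ q then S q m else 0)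
            * ∑ j ∈ range (n + 1), (if j ≤ m then s m j * x ^ j else 0) := by
      simp only [hD, Finset.sum_mul]
      rw [Finset.sum_comm]
      apply Finset.sum_congr rfl; intro m _
      rw [Finset.mul_sum]
      apply Finset.sum_congr rfl; intro j _
      by_cases h1 : m ≤ q <;> by_cases h2 : j ≤ m <;> simp [h1, h2, mul_assoc]
    rw [h1]
    have h2 : ∀ m ∈ range (n + 1),
        (if m ≤ q then S q m else 0) * ∑ j ∈ range (n + 1), (if j ≤ m then s m j * x ^ j else 0)
          = (if m ≤ q then S q m * ∏ i ∈ range m, (x - α i) else 0) := by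
      intro m hm
      rw [sum_if_le (Nat.lt_succ_iff.mp (mem_range.mp hm)) (fun j => s m j * x ^ j),
        ← hs m (Nat.lt_succ_iff.mp (mem_range.mp hm)) x]
      by_cases h : m ≤ q <;> simp [h]
    rw [Finset.sum_congr rfl h2, sum_if_le hq (fun m => S q m * ∏ i ∈ range m, (x - α i)),
      ← hS q hq x]
    rw [Finset.sum_congr rfl (fun j _ => boole_mul (j = q) (x ^ j)),
      Finset.sum_ite_eq' (range (n + 1)) q (fun j => x ^ j)]
    simp [Nat.lt_succ_iff.mpr hq]
  have stepC : ∀ q ≤ n, ∀ j ≤ n, D q j = if j = q then 1 else 0 := by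
    intro q hq j hj
    exact coeff_ext (n + 1) (D q) (fun j => if j = q then 1 else 0) (stepA q hq) j
      (Nat.lt_succ_iff.mpr hj)
  set Ms : Matrix (Fin (n + 1)) (Fin (n + 1)) ℝ :=
    fun m j => if (j : ℕ) ≤ (m : ℕ) then s m j else 0 with hMs
  set MS : Matrix (Fin (n + 1)) (Fin (n + 1)) ℝ :=
    fun q m => if (m : ℕ) ≤ (q : ℕ) then S q m else 0 with hMS
  have hone : MS * Ms = 1 := by
    ext q j
    rw [Matrix.mul_apply, Matrix.one_apply]
    have e : ∑ m : Fin (n + 1), MS q m * Ms m j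
        = ∑ m ∈ range (n + 1), (if m ≤ (q:ℕ) then S q m else 0) * (if (j:ℕ) ≤ m then s m j else 0) :=
      Fin.sum_univ_eq_sum_range
        (fun m => (if m ≤ (q:ℕ) then S (q:ℕ) m else 0) * (if (j:ℕ) ≤ m then s m (j:ℕ) else 0)) (n+1)
    have hc := stepC q (Nat.lt_succ_iff.mp q.isLt) j (Nat.lt_succ_iff.mp j.isLt)
    simp only [hD] at hc
    rw [e, hc]
    have hiff : (q = j) ↔ ((j:ℕ) = (q:ℕ)) := by rw [Fin.ext_iff]; exact eq_comm
    simp only [hiff]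
  have hone' : Ms * MS = 1 := mul_eq_one_comm.mp hone
  intro m hm p hp
  have key := congrArg (fun A => A ⟨m, Nat.lt_succ_iff.mpr hm⟩ ⟨p, Nat.lt_succ_iff.mpr hp⟩) hone'
  simp only [Matrix.mul_apply, Matrix.one_apply, Fin.mk.injEq] at key
  have e : ∑ j : Fin (n + 1), Ms ⟨m, Nat.lt_succ_iff.mpr hm⟩ j * MS j ⟨p, Nat.lt_succ_iff.mpr hp⟩
      = ∑ j ∈ range (n + 1), (if j ≤ m then s m j else 0) * (if p ≤ j then S j p else 0) :=
    Fin.sum_univ_eq_sum_range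
      (fun j => (if j ≤ m then s m j else 0) * (if p ≤ j then S j p else 0)) (n+1)
  rw [e] at key
  rw [← key]
  have e2 : ∀ j ∈ range (n+1), (if j ≤ m then s m j else 0) * (if p ≤ j then S j p else 0)
      = if p ≤ j ∧ j ≤ m then s m j * S j p else 0 := by
    intro j _
    by_cases h1 : j ≤ m <;> by_cases h2 : p ≤ j <;> simp [h1, h2]
  rw [Finset.sum_congr rfl e2, ← Finset.sum_filter]
  apply Finset.sum_congr _ (fun _ _ => rfl)
  ext j
  simp only [mem_filter, mem_range, mem_Icc]
  omega

theorem stmt19 (n k : ℕ) (hk : 1 ≤ k) (α : ℕ → ℝ) (L : Fin k → ℝ)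
    (hL : ∀ i, L i ≠ 0) (z : ℝ) (s : ℕ → ℕ → ℝ) (S : ℕ → ℕ → ℝ)
    (hs : ∀ m ≤ n, ∀ x : ℝ,
      ∏ i ∈ range m, (x - α i) = ∑ j ∈ range (m + 1), s m j * x ^ j)
    (hS : ∀ p ≤ n, ∀ x : ℝ,
      x ^ p = ∑ m ∈ range (p + 1), S p m * ∏ i ∈ range m, (x - α i)) :
    iterInt (List.ofFn L) (fun t => ∏ i ∈ range n, (-t - α i + z)) =
      ∑ j ∈ range (n + 1), ∑ m ∈ Icc j n,
        (-1 : ℝ) ^ j * (s n m * s m j / (m.factorial : ℝ)) *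
          ((-1 : ℝ) ^ j * ∑ i ∈ range (j + 1), ∑ p ∈ Icc i j,
            (-1 : ℝ) ^ p * (p.factorial : ℝ) * (p.choose i : ℝ) * S j p *
              (∏ q, L q) ^ (p - i + 1) / (((p - i : ℕ) : ℝ) + 1) ^ k * (-z) ^ i) := by
  have hinv := stirling_inv n α s S hs hS
  set P : ℝ := ∏ q, L q with hP
  set g : ℕ → ℝ := fun p => ∑ i ∈ range (p + 1),
      (-1:ℝ) ^ p * (p.factorial : ℝ) * (p.choose i : ℝ)
        * P ^ (p - i + 1) / (((p - i : ℕ) : ℝ) + 1) ^ k * (-z) ^ i with hg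
  -- Step 1 : rewrite the integrand as a polynomial in t
  have hint : (fun t : ℝ => ∏ i ∈ range n, (-t - α i + z))
      = fun t => ∑ p ∈ range (n + 1),
          (∑ m ∈ Icc p n, s n m * (m.choose p : ℝ) * z ^ (m - p) * (-1:ℝ) ^ p) * t ^ p := by
    funext t
    have h1 : ∏ i ∈ range n, (-t - α i + z) = ∏ i ∈ range n, ((z - t) - α i) :=
      Finset.prod_congr rfl (fun i _ => by ring)
    have h2 : ∀ m, (z - t) ^ m
        = ∑ p ∈ range (m + 1), (m.choose p : ℝ) * z ^ (m - p) * (-1:ℝ) ^ p * t ^ p := by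
      intro m
      rw [sub_eq_add_neg, add_pow, ← Finset.sum_range_reflect]
      apply Finset.sum_congr rfl
      intro p hp
      have hpm : p ≤ m := Nat.lt_succ_iff.mp (mem_range.mp hp)
      have e1 : m + 1 - 1 - p = m - p := by omega
      have e2 : m - (m - p) = p := by omega
      rw [e1, e2, Nat.choose_symm hpm, neg_pow]
      ring
    rw [h1, hs n le_rfl (z - t)]
    simp_rw [h2, Finset.mul_sum]
    rw [swap_sum n (fun m p => s n m * ((m.choose p : ℝ) * z ^ (m - p) * (-1:ℝ) ^ p * t ^ p))]
    apply Finset.sum_congr rfl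
    intro p _
    rw [Finset.sum_mul]
    apply Finset.sum_congr rfl
    intro m _
    ring
  rw [hint, iterInt_sum_pow]
  simp only [List.prod_ofFn, List.length_ofFn, ← hP]
  -- Now transform the RHS
  have stepR : ∀ j ≤ n, (∑ i ∈ range (j + 1), ∑ p ∈ Icc i j,
        (-1 : ℝ) ^ p * (p.factorial : ℝ) * (p.choose i : ℝ) * S j p
          * P ^ (p - i + 1) / (((p - i : ℕ) : ℝ) + 1) ^ k * (-z) ^ i)
      = ∑ p ∈ range (j + 1), S j p * g p := by
    intro j _
    rw [← swap_sum j (fun p i => (-1 : ℝ) ^ p * (p.factorial : ℝ) * (p.choose i : ℝ) * S j p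
          * P ^ (p - i + 1) / (((p - i : ℕ) : ℝ) + 1) ^ k * (-z) ^ i)]
    apply Finset.sum_congr rfl
    intro p _
    rw [hg, Finset.mul_sum]
    apply Finset.sum_congr rfl
    intro i _
    ring
  have hRHS : (∑ j ∈ range (n + 1), ∑ m ∈ Icc j n,
        (-1 : ℝ) ^ j * (s n m * s m j / (m.factorial : ℝ)) *
          ((-1 : ℝ) ^ j * ∑ i ∈ range (j + 1), ∑ p ∈ Icc i j,
            (-1 : ℝ) ^ p * (p.factorial : ℝ) * (p.choose i : ℝ) * S j p *
              P ^ (p - i + 1) / (((p - i : ℕ) : ℝ) + 1) ^ k * (-z) ^ i))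
      = ∑ m ∈ range (n + 1), s n m / (m.factorial : ℝ) * g m := by
    have step1 : ∀ j ∈ range (n+1), ∀ m ∈ Icc j n,
        (-1 : ℝ) ^ j * (s n m * s m j / (m.factorial : ℝ)) *
          ((-1 : ℝ) ^ j * ∑ i ∈ range (j + 1), ∑ p ∈ Icc i j,
            (-1 : ℝ) ^ p * (p.factorial : ℝ) * (p.choose i : ℝ) * S j p *
              P ^ (p - i + 1) / (((p - i : ℕ) : ℝ) + 1) ^ k * (-z) ^ i)
        = s n m / (m.factorial : ℝ) * (s m j * ∑ p ∈ range (j + 1), S j p * g p) := by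
      intro j hj m hm
      rw [stepR j (le_trans (mem_Icc.mp hm).1 (mem_Icc.mp hm).2)]
      have hsq : (-1:ℝ) ^ j * (-1:ℝ) ^ j = 1 := by
        rw [← pow_add, Even.neg_one_pow ⟨j, rfl⟩]
      calc (-1 : ℝ) ^ j * (s n m * s m j / (m.factorial : ℝ)) *
            ((-1 : ℝ) ^ j * ∑ p ∈ range (j + 1), S j p * g p)
          = ((-1:ℝ)^j * (-1:ℝ)^j) * ((s n m * s m j / (m.factorial : ℝ)) *
              ∑ p ∈ range (j + 1), S j p * g p) := by ring
        _ = _ := by rw [hsq]; ring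
    rw [Finset.sum_congr rfl (fun j hj => Finset.sum_congr rfl (step1 j hj))]
    rw [← swap_sum n (fun m j => s n m / (m.factorial : ℝ)
          * (s m j * ∑ p ∈ range (j + 1), S j p * g p))]
    apply Finset.sum_congr rfl
    intro m hm
    have hmn : m ≤ n := Nat.lt_succ_iff.mp (mem_range.mp hm)
    have inner : ∑ j ∈ range (m + 1), s n m / (m.factorial : ℝ)
          * (s m j * ∑ p ∈ range (j + 1), S j p * g p)
        = s n m / (m.factorial : ℝ)
          * ∑ j ∈ range (m + 1), ∑ p ∈ range (j + 1), s m j * S j p * g p := by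
      rw [Finset.mul_sum]
      apply Finset.sum_congr rfl
      intro j _
      rw [Finset.mul_sum, Finset.mul_sum, Finset.mul_sum]
      apply Finset.sum_congr rfl
      intro p _
      ring
    rw [inner, swap_sum m (fun j p => s m j * S j p * g p)]
    have inner2 : ∑ p ∈ range (m + 1), ∑ j ∈ Icc p m, s m j * S j p * g p
        = ∑ p ∈ range (m + 1), (if m = p then 1 else 0) * g p := by
      apply Finset.sum_congr rfl
      intro p hp
      rw [← Finset.sum_mul, hinv m hmn p (le_trans (Nat.lt_succ_iff.mp (mem_range.mp hp)) hmn)]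
    rw [inner2]
    rw [Finset.sum_congr rfl (fun p _ => boole_mul (m = p) (g p)),
      Finset.sum_ite_eq (range (m + 1)) m g]
    simp
  rw [hRHS]
  -- swap the double sum on the left-hand side
  have hswapL : ∑ p ∈ range (n + 1),
        (∑ m ∈ Icc p n, s n m * (m.choose p : ℝ) * z ^ (m - p) * (-1:ℝ) ^ p)
          * P ^ (p + 1) / ((p : ℝ) + 1) ^ k
      = ∑ m ∈ range (n + 1), ∑ p ∈ range (m + 1),
          s n m * (m.choose p : ℝ) * z ^ (m - p) * (-1:ℝ) ^ p
            * P ^ (p + 1) / ((p : ℝ) + 1) ^ k := by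
    rw [swap_sum n (fun m p => s n m * (m.choose p : ℝ) * z ^ (m - p) * (-1:ℝ) ^ p
          * P ^ (p + 1) / ((p : ℝ) + 1) ^ k)]
    apply Finset.sum_congr rfl
    intro p _
    rw [Finset.sum_mul, Finset.sum_div]
  rw [hswapL]
  -- final per-m identity
  apply Finset.sum_congr rfl
  intro m hm
  have hgm : g m = ∑ p ∈ range (m + 1),
      (m.factorial : ℝ) * (m.choose p : ℝ) * z ^ (m - p) * (-1:ℝ)^p
        * P ^ (p + 1) / ((p : ℝ) + 1) ^ k := by
    rw [hg, ← Finset.sum_range_reflect]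
    apply Finset.sum_congr rfl
    intro p hp
    have hpm : p ≤ m := Nat.lt_succ_iff.mp (mem_range.mp hp)
    have e1 : m + 1 - 1 - p = m - p := by omega
    have e2 : m - (m - p) = p := by omega
    have e3 : (-1:ℝ) ^ m * (-1:ℝ) ^ (m - p) = (-1:ℝ) ^ p := by
      rw [← pow_add]
      have : m + (m - p) = 2 * (m - p) + p := by omega
      rw [this, pow_add, pow_mul]
      simp
    rw [e1, e2, Nat.choose_symm hpm, neg_pow z]
    have e4 : (-1:ℝ) ^ m * (-1:ℝ) ^ p = (-1:ℝ) ^ (m - p) := by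
      rw [← pow_add]
      have h4 : m + p = 2 * p + (m - p) := by omega
      rw [h4, pow_add, pow_mul]
      simp
    calc (-1:ℝ) ^ m * ↑m.factorial * ↑(m.choose p) * P ^ (m - p + 1) / (↑(m - p) + 1) ^ k
          * ((-1:ℝ) ^ p * z ^ p)
        = ((-1:ℝ) ^ m * (-1:ℝ) ^ p)
            * (↑m.factorial * ↑(m.choose p) * z ^ p * P ^ (m - p + 1) / (↑(m - p) + 1) ^ k) := by
          ring
      _ = _ := by rw [e4]; ring
  rw [hgm, Finset.mul_sum]
  apply Finset.sum_congr rfl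
  intro p _
  have hfac : ((m.factorial : ℝ)) ≠ 0 := Nat.cast_ne_zero.mpr m.factorial_ne_zero
  field_simp
end
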